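/- For any subset τ ⊆ {1,…,n}, the ℂ-algebra homomorphism from the monoid algebra ℂ[ℕA] to the monoid algebra ℂ[ℕA + ℤτ] induced by the inclusion of monoids ℕA ⊆ ℕA + ℤτ exhibits ℂ[ℕA + ℤτ] as the localization of ℂ[ℕA] at the multiplicative submonoid generated by the monomials x^{aᵢ} for i ∈ τ. -/

import Mathlib

/-- The semigroup `ℕA`: the additive submonoid of `ℤ^d` generated by the
columns `a 1, …, a n` of the matrix `A`. -/
def semigroupNA (d n : ℕ) (a : Fin n → (Fin d → ℤ)) : AddSubmonoid (Fin d → ℤ) :=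
  AddSubmonoid.closure (Set.range a)

/-- The subgroup `ℤτ` of `ℤ^d` generated by the columns `a i` for `i ∈ τ`. -/
def groupZface (d n : ℕ) (a : Fin n → (Fin d → ℤ)) (τ : Set (Fin n)) :
    AddSubgroup (Fin d → ℤ) :=
  AddSubgroup.closure (a '' τ)

/-- The additive submonoid `ℕA + ℤτ = {u + v : u ∈ ℕA, v ∈ ℤτ}` of `ℤ^d`. -/
def NAplusZsub (d n : ℕ) (a : Fin n → (Fin d → ℤ)) (τ : Set (Fin n)) :
    AddSubmonoid (Fin d → ℤ) where
  carrier := {x | ∃ u ∈ semigroupNA d n a, ∃ v ∈ groupZface d n a τ, x = u + v}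
  zero_mem' := ⟨0, zero_mem _, 0, zero_mem _, by simp⟩
  add_mem' := by
    rintro x y ⟨u, hu, v, hv, rfl⟩ ⟨u', hu', v', hv', rfl⟩
    exact ⟨u + u', add_mem hu hu', v + v', add_mem hv hv', by abel⟩

/-- Each column `a i` belongs to `ℕA`. -/
theorem col_mem_semigroupNA (d n : ℕ) (a : Fin n → (Fin d → ℤ)) (i : Fin n) :
    a i ∈ semigroupNA d n a :=
  AddSubmonoid.subset_closure ⟨i, rfl⟩

/-- The inclusion of monoids `ℕA ⊆ ℕA + ℤτ`. -/
theorem semigroupNA_le_NAplusZsub (d n : ℕ) (a : Fin n → (Fin d → ℤ))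
    (τ : Set (Fin n)) : semigroupNA d n a ≤ NAplusZsub d n a τ :=
  fun x hx => ⟨x, hx, 0, zero_mem _, by simp⟩

/-- Any element of the subgroup closure of `T` becomes an element of the submonoid
closure of `T` after adding a suitable element of the submonoid closure of `T`. -/
theorem exists_add_mem_submonoid_closure {G : Type*} [AddCommGroup G] (T : Set G) :
    ∀ v ∈ AddSubgroup.closure T, ∃ s ∈ AddSubmonoid.closure T,
      v + s ∈ AddSubmonoid.closure T := by
  intro v hv
  induction hv using AddSubgroup.closure_induction with
  | mem x hx => exact ⟨0, zero_mem _, by simpa using AddSubmonoid.subset_closure hx⟩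
  | zero => exact ⟨0, zero_mem _, by simpa using zero_mem _⟩
  | add x y hx hy ihx ihy =>
    obtain ⟨s, hs, hw⟩ := ihx
    obtain ⟨t, ht, hw'⟩ := ihy
    refine ⟨s + t, add_mem hs ht, ?_⟩
    have heq : x + y + (s + t) = x + s + (y + t) := by abel
    rw [heq]; exact add_mem hw hw'
  | neg x hx ih =>
    obtain ⟨s, hs, hw⟩ := ih
    exact ⟨x + s, hw, by simpa using hs⟩

/-- the `ℂ`-algebra homomorphism `ℂ[ℕA] → ℂ[ℕA + ℤτ]` induced by the
inclusion of monoids `ℕA ⊆ ℕA + ℤτ` exhibits `ℂ[ℕA + ℤτ]` as the localization of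
`ℂ[ℕA]` at the multiplicative submonoid generated by the monomials `x^(a i)`, `i ∈ τ`. -/
theorem isLocalization_monoidAlgebra_NAplusZ
    (d n : ℕ) (hd : 0 < d) (hn : 0 < n) (a : Fin n → (Fin d → ℤ))
    (τ : Set (Fin n)) :
    @IsLocalization (AddMonoidAlgebra ℂ (semigroupNA d n a)) _
      (Submonoid.closure {x : AddMonoidAlgebra ℂ (semigroupNA d n a) |
        ∃ i ∈ τ, x = AddMonoidAlgebra.of' ℂ (semigroupNA d n a)
          ⟨a i, col_mem_semigroupNA d n a i⟩})
      (AddMonoidAlgebra ℂ (NAplusZsub d n a τ)) _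
      ((AddMonoidAlgebra.mapDomainAlgHom ℂ ℂ
        (AddSubmonoid.inclusion
          (semigroupNA_le_NAplusZsub d n a τ))).toRingHom.toAlgebra) := by
  set M := semigroupNA d n a with hM
  set N := NAplusZsub d n a τ with hN
  set ι := AddSubmonoid.inclusion (semigroupNA_le_NAplusZsub d n a τ) with hι
  letI : Algebra (AddMonoidAlgebra ℂ M) (AddMonoidAlgebra ℂ N) :=
    (AddMonoidAlgebra.mapDomainAlgHom ℂ ℂ ι).toRingHom.toAlgebra
  have halg : ∀ x, algebraMap (AddMonoidAlgebra ℂ M) (AddMonoidAlgebra ℂ N) x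
      = AddMonoidAlgebra.mapDomain ι x := fun x => rfl
  have halg_single : ∀ (w : M) (c : ℂ),
      algebraMap (AddMonoidAlgebra ℂ M) (AddMonoidAlgebra ℂ N) (AddMonoidAlgebra.single w c)
      = AddMonoidAlgebra.single (ι w) c := by
    intro w c; rw [halg, AddMonoidAlgebra.mapDomain_single]
  -- monomials with exponent in the submonoid closure of `a '' τ` lie in the
  -- multiplicative closure of the generators
  have key : ∀ s ∈ AddSubmonoid.closure (a '' τ), ∃ hsM : s ∈ M,
      AddMonoidAlgebra.of' ℂ M ⟨s, hsM⟩ ∈ Submonoid.closure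
        {x : AddMonoidAlgebra ℂ M | ∃ i ∈ τ, x = AddMonoidAlgebra.of' ℂ M
          ⟨a i, col_mem_semigroupNA d n a i⟩} := by
    intro s hs
    induction hs using AddSubmonoid.closure_induction with
    | mem x hx =>
      obtain ⟨i, hi, rfl⟩ := hx
      exact ⟨col_mem_semigroupNA d n a i, Submonoid.subset_closure ⟨i, hi, rfl⟩⟩
    | zero =>
      refine ⟨zero_mem _, ?_⟩
      have : AddMonoidAlgebra.of' ℂ M ⟨0, zero_mem M⟩ = 1 := by
        rw [AddMonoidAlgebra.of'_apply]
        exact (AddMonoidAlgebra.one_def).symm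
      rw [this]; exact one_mem _
    | add x y hx hy ihx ihy =>
      obtain ⟨h1, m1⟩ := ihx
      obtain ⟨h2, m2⟩ := ihy
      refine ⟨add_mem h1 h2, ?_⟩
      have : AddMonoidAlgebra.of' ℂ M ⟨x + y, add_mem h1 h2⟩
          = AddMonoidAlgebra.of' ℂ M ⟨x, h1⟩ * AddMonoidAlgebra.of' ℂ M ⟨y, h2⟩ := by
        simp only [AddMonoidAlgebra.of'_apply, AddMonoidAlgebra.single_mul_single, one_mul]
        rfl
      rw [this]; exact mul_mem m1 m2
  have hTle : AddSubmonoid.closure (a '' τ) ≤ M := by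
    rw [hM, semigroupNA]
    exact AddSubmonoid.closure_mono (by rintro x ⟨i, _, rfl⟩; exact ⟨i, rfl⟩)
  refine { map_units := ?_, surj := ?_, exists_of_eq := ?_ }
  · rintro ⟨y, hy⟩
    simp only
    induction hy using Submonoid.closure_induction with
    | mem x hx =>
      obtain ⟨i, hi, rfl⟩ := hx
      have hmem : -(a i) ∈ N :=
        ⟨0, zero_mem _, -(a i), neg_mem (AddSubgroup.subset_closure ⟨i, hi, rfl⟩), by simp⟩
      apply IsUnit.of_mul_eq_one (AddMonoidAlgebra.of' ℂ N ⟨-(a i), hmem⟩)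
      rw [AddMonoidAlgebra.of'_apply, halg_single, AddMonoidAlgebra.of'_apply,
        AddMonoidAlgebra.single_mul_single, one_mul]
      have : ι ⟨a i, col_mem_semigroupNA d n a i⟩ + ⟨-(a i), hmem⟩ = 0 :=
        Subtype.ext (by simp [hι, AddSubmonoid.inclusion, AddSubmonoid.coe_zero])
      rw [this]
      exact (AddMonoidAlgebra.one_def).symm
    | one => simpa using isUnit_one
    | mul x y hx hy ihx ihy =>
      rw [map_mul]
      exact ihx.mul ihy
  · intro z
    induction z using AddMonoidAlgebra.induction_linear with
    | zero => exact ⟨(0, 1), by simp⟩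
    | add f g ihf ihg =>
      obtain ⟨⟨r1, m1⟩, h1⟩ := ihf
      obtain ⟨⟨r2, m2⟩, h2⟩ := ihg
      refine ⟨(r1 * (m2 : AddMonoidAlgebra ℂ M) + r2 * (m1 : AddMonoidAlgebra ℂ M),
        m1 * m2), ?_⟩
      simp only [Submonoid.coe_mul, map_mul, map_add] at *
      ring_nf
      linear_combination
        (algebraMap (AddMonoidAlgebra ℂ M) (AddMonoidAlgebra ℂ N) (m2 : AddMonoidAlgebra ℂ M)) * h1
        + (algebraMap (AddMonoidAlgebra ℂ M) (AddMonoidAlgebra ℂ N) (m1 : AddMonoidAlgebra ℂ M)) * h2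
    | single w c =>
      obtain ⟨u, hu, v, hv, hwuv⟩ := w.2
      obtain ⟨s, hsT, hvsT⟩ := exists_add_mem_submonoid_closure (a '' τ) v hv
      obtain ⟨hsM, hsGen⟩ := key s hsT
      have hM2 : u + (v + s) ∈ M := add_mem hu (hTle hvsT)
      refine ⟨(AddMonoidAlgebra.single ⟨u + (v + s), hM2⟩ c, ⟨_, hsGen⟩), ?_⟩
      simp only
      rw [AddMonoidAlgebra.of'_apply, halg_single, halg_single,
        AddMonoidAlgebra.single_mul_single, mul_one]
      congr 1
      apply Subtype.ext
      show (w : Fin d → ℤ) + s = u + (v + s)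
      rw [hwuv]; abel
  · intro x y h
    refine ⟨1, ?_⟩
    simp only [OneMemClass.coe_one, one_mul]
    have hinj : Function.Injective ι := fun p q hpq => Subtype.ext (by
      have := congrArg Subtype.val hpq
      simpa [hι, AddSubmonoid.inclusion] using this)
    exact AddMonoidAlgebra.mapDomain_injective hinj (by rw [← halg, ← halg, h])
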